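/- Bias bound for kernel ridge regression: with φ : X → ℝ^d, ‖w‖₂ ≤ B, V_n = λ²I + Σᵢφ(xᵢ)φ(xᵢ)ᵀ, the noiseless prediction error satisfies |wᵀφ(x) − φ(x)ᵀV_n⁻¹Σᵢφ(xᵢ)(wᵀφ(xᵢ))| = λ²|φ(x)ᵀV_n⁻¹w| ≤ B·λ·√(φ(x)ᵀV_n⁻¹φ(x)) = B·σ_n(x). -/

import Mathlib

open Matrix Finset

lemma krr_vecMulVec_mulVec {d : ℕ} (v u : Fin d → ℝ) :
    Matrix.vecMulVec v v *ᵥ u = (v ⬝ᵥ u) • v := by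
  ext i
  simp only [Matrix.mulVec, dotProduct, Matrix.vecMulVec_apply, Pi.smul_apply,
    smul_eq_mul, Finset.sum_mul]
  exact Finset.sum_congr rfl fun j _ => by ring

lemma krr_psd_vecMulVec {d : ℕ} (v : Fin d → ℝ) :
    (Matrix.vecMulVec v v).PosSemidef := by
  refine Matrix.PosSemidef.of_dotProduct_mulVec_nonneg ?_ ?_
  · ext i j
    simp [Matrix.conjTranspose_apply, Matrix.vecMulVec_apply, mul_comm]
  · intro u
    have hu : star u = u := funext fun i => star_trivial _
    rw [krr_vecMulVec_mulVec, hu, dotProduct_smul, smul_eq_mul, dotProduct_comm]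
    exact mul_self_nonneg _

lemma krr_sum_mulVec {d m : ℕ} (A : Fin m → Matrix (Fin d) (Fin d) ℝ) (v : Fin d → ℝ) :
    (∑ i, A i) *ᵥ v = ∑ i, A i *ᵥ v := by
  ext j
  simp only [Matrix.mulVec, dotProduct, Finset.sum_apply, Matrix.sum_apply,
    Finset.sum_mul]
  rw [Finset.sum_comm]

lemma krr_dotProduct_sum {d m : ℕ} (v : Fin d → ℝ) (f : Fin m → Fin d → ℝ) :
    v ⬝ᵥ (∑ i, f i) = ∑ i, v ⬝ᵥ f i := by
  simp only [dotProduct, Finset.sum_apply, Finset.mul_sum]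
  rw [Finset.sum_comm]

lemma krr_abs_dot_le {d : ℕ} (a b : Fin d → ℝ) :
    |a ⬝ᵥ b| ≤ Real.sqrt (a ⬝ᵥ a) * Real.sqrt (b ⬝ᵥ b) := by
  have h1 : a ⬝ᵥ a = ∑ i, a i ^ 2 := by simp [dotProduct, sq]
  have h2 : b ⬝ᵥ b = ∑ i, b i ^ 2 := by simp [dotProduct, sq]
  rw [h1, h2]
  calc |a ⬝ᵥ b| = Real.sqrt ((∑ i, a i * b i) ^ 2) := by
        rw [Real.sqrt_sq_eq_abs]; rfl
    _ ≤ Real.sqrt ((∑ i, a i ^ 2) * ∑ i, b i ^ 2) :=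
        Real.sqrt_le_sqrt (Finset.sum_mul_sq_le_sq_mul_sq _ _ _)
    _ = Real.sqrt (∑ i, a i ^ 2) * Real.sqrt (∑ i, b i ^ 2) :=
        Real.sqrt_mul (by positivity) _

lemma krr_dot_self_nonneg {d : ℕ} (a : Fin d → ℝ) : 0 ≤ a ⬝ᵥ a :=
  Finset.sum_nonneg fun i _ => mul_self_nonneg _

theorem krr_bias_bound
    {X : Type*} {d n : ℕ} (φ : X → (Fin d → ℝ))
    (w : Fin d → ℝ) (B : ℝ) (hw : Real.sqrt (∑ j, (w j) ^ 2) ≤ B)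
    (lam : ℝ) (hlam : 0 < lam) (xs : Fin n → X) (x : X) :
    |w ⬝ᵥ φ x -
        φ x ⬝ᵥ ((lam ^ 2) • (1 : Matrix (Fin d) (Fin d) ℝ) +
            ∑ i, Matrix.vecMulVec (φ (xs i)) (φ (xs i)))⁻¹ *ᵥ
          (∑ i, (w ⬝ᵥ φ (xs i)) • φ (xs i))| =
      lam ^ 2 * |φ x ⬝ᵥ ((lam ^ 2) • (1 : Matrix (Fin d) (Fin d) ℝ) +
            ∑ i, Matrix.vecMulVec (φ (xs i)) (φ (xs i)))⁻¹ *ᵥ w| ∧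
    lam ^ 2 * |φ x ⬝ᵥ ((lam ^ 2) • (1 : Matrix (Fin d) (Fin d) ℝ) +
            ∑ i, Matrix.vecMulVec (φ (xs i)) (φ (xs i)))⁻¹ *ᵥ w| ≤
      B * lam * Real.sqrt (φ x ⬝ᵥ ((lam ^ 2) • (1 : Matrix (Fin d) (Fin d) ℝ) +
            ∑ i, Matrix.vecMulVec (φ (xs i)) (φ (xs i)))⁻¹ *ᵥ φ x) := by
  set A : Matrix (Fin d) (Fin d) ℝ :=
    (lam ^ 2) • (1 : Matrix (Fin d) (Fin d) ℝ) +
      ∑ i, Matrix.vecMulVec (φ (xs i)) (φ (xs i)) with hAdef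
  -- A is positive definite
  have hsum : (∑ i, Matrix.vecMulVec (φ (xs i)) (φ (xs i))).PosSemidef :=
    Finset.sum_induction _ _ (fun a b ha hb => ha.add hb) Matrix.PosSemidef.zero
      (fun i _ => krr_psd_vecMulVec _)
  have hdiag : ((lam ^ 2) • (1 : Matrix (Fin d) (Fin d) ℝ)).PosDef := by
    rw [Matrix.smul_one_eq_diagonal]
    exact Matrix.PosDef.diagonal fun i => by positivity
  have hA : A.PosDef := hdiag.add_posSemidef hsum
  have hAu : IsUnit A.det := hA.det_pos.ne'.isUnit
  have hAinv : A⁻¹.PosDef := hA.inv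
  -- key identity : A *ᵥ w = lam^2 • w + ∑ (w ⬝ φᵢ) • φᵢ
  have hAw : A *ᵥ w = lam ^ 2 • w + ∑ i, (w ⬝ᵥ φ (xs i)) • φ (xs i) := by
    rw [hAdef, Matrix.add_mulVec, Matrix.smul_mulVec, Matrix.one_mulVec,
      krr_sum_mulVec]
    congr 1
    exact Finset.sum_congr rfl fun i _ => by
      rw [krr_vecMulVec_mulVec, dotProduct_comm]
  have hinvA : ∀ u : Fin d → ℝ, A⁻¹ *ᵥ (A *ᵥ u) = u := fun u => by
    rw [Matrix.mulVec_mulVec, Matrix.nonsing_inv_mul _ hAu, Matrix.one_mulVec]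
  have hkey : A⁻¹ *ᵥ (∑ i, (w ⬝ᵥ φ (xs i)) • φ (xs i))
      = w - lam ^ 2 • (A⁻¹ *ᵥ w) := by
    have : (∑ i, (w ⬝ᵥ φ (xs i)) • φ (xs i)) = A *ᵥ w - lam ^ 2 • w := by
      rw [hAw]; abel
    rw [this, Matrix.mulVec_sub, hinvA, Matrix.mulVec_smul]
  have heq : w ⬝ᵥ φ x - φ x ⬝ᵥ A⁻¹ *ᵥ (∑ i, (w ⬝ᵥ φ (xs i)) • φ (xs i))
      = lam ^ 2 * (φ x ⬝ᵥ A⁻¹ *ᵥ w) := by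
    rw [hkey, dotProduct_sub, dotProduct_smul, dotProduct_comm w (φ x)]
    simp only [smul_eq_mul]
    ring
  have hfirst : |w ⬝ᵥ φ x - φ x ⬝ᵥ A⁻¹ *ᵥ (∑ i, (w ⬝ᵥ φ (xs i)) • φ (xs i))|
      = lam ^ 2 * |φ x ⬝ᵥ A⁻¹ *ᵥ w| := by
    rw [heq, abs_mul, abs_of_nonneg (by positivity : (0:ℝ) ≤ lam ^ 2)]
  refine ⟨hfirst, ?_⟩
  -- second part : the bound
  open scoped MatrixOrder in set S : Matrix (Fin d) (Fin d) ℝ := CFC.sqrt A⁻¹ with hSdef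
  have hSS : S * S = A⁻¹ := by
    open scoped MatrixOrder in exact CFC.sqrt_mul_sqrt_self _ hAinv.posSemidef.nonneg
  have hSsym : Sᵀ = S := by
    have h : S.IsHermitian := by
      open scoped MatrixOrder in exact (CFC.sqrt_nonneg A⁻¹).posSemidef.isHermitian
    ext i j
    have := congrFun (congrFun h i) j
    simpa [Matrix.conjTranspose_apply] using this
  have hdot : ∀ u v : Fin d → ℝ, u ⬝ᵥ A⁻¹ *ᵥ v = (S *ᵥ u) ⬝ᵥ (S *ᵥ v) := by
    intro u v
    rw [← hSS, ← Matrix.mulVec_mulVec, Matrix.dotProduct_mulVec u S,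
      ← Matrix.mulVec_transpose, hSsym]
  -- norm of w
  have hwB : Real.sqrt (w ⬝ᵥ w) ≤ B := by
    have : w ⬝ᵥ w = ∑ j, (w j) ^ 2 := by simp [dotProduct, sq]
    rw [this]; exact hw
  have hB0 : 0 ≤ B := le_trans (Real.sqrt_nonneg _) hwB
  -- bound on w ⬝ A⁻¹ w
  have hwAw : lam ^ 2 * (w ⬝ᵥ A⁻¹ *ᵥ w) ≤ w ⬝ᵥ w := by
    set v : Fin d → ℝ := A⁻¹ *ᵥ w with hvdef
    have hAv : A *ᵥ v = w := by
      rw [hvdef, Matrix.mulVec_mulVec, Matrix.mul_nonsing_inv _ hAu, Matrix.one_mulVec]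
    have hlower : lam ^ 2 * (v ⬝ᵥ v) ≤ w ⬝ᵥ v := by
      have : w ⬝ᵥ v = lam ^ 2 * (v ⬝ᵥ v) + ∑ i, (v ⬝ᵥ φ (xs i)) * (φ (xs i) ⬝ᵥ v) := by
        calc w ⬝ᵥ v = (A *ᵥ v) ⬝ᵥ v := by rw [hAv]
          _ = v ⬝ᵥ (A *ᵥ v) := dotProduct_comm _ _
          _ = _ := by
              rw [hAdef, Matrix.add_mulVec, Matrix.smul_mulVec, Matrix.one_mulVec,
                dotProduct_add, dotProduct_smul, krr_sum_mulVec, krr_dotProduct_sum]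
              rw [smul_eq_mul]
              congr 1
              exact Finset.sum_congr rfl fun i _ => by
                rw [krr_vecMulVec_mulVec, dotProduct_smul, smul_eq_mul, dotProduct_comm]
      rw [this]
      have : 0 ≤ ∑ i, (v ⬝ᵥ φ (xs i)) * (φ (xs i) ⬝ᵥ v) :=
        Finset.sum_nonneg fun i _ => by rw [dotProduct_comm (φ (xs i)) v]; exact mul_self_nonneg _
      linarith
    have hcs : w ⬝ᵥ v ≤ Real.sqrt (w ⬝ᵥ w) * Real.sqrt (v ⬝ᵥ v) :=
      le_trans (le_abs_self _) (krr_abs_dot_le w v)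
    set s : ℝ := Real.sqrt (v ⬝ᵥ v) with hs
    set t : ℝ := Real.sqrt (w ⬝ᵥ w) with ht
    have hs0 : 0 ≤ s := Real.sqrt_nonneg _
    have ht0 : 0 ≤ t := Real.sqrt_nonneg _
    have hssq : s ^ 2 = v ⬝ᵥ v := Real.sq_sqrt (krr_dot_self_nonneg v)
    have htsq : t ^ 2 = w ⬝ᵥ w := Real.sq_sqrt (krr_dot_self_nonneg w)
    -- lam^2 * s^2 ≤ w⬝v ≤ t * s  ⇒  lam^2 * (w⬝v) ≤ t^2
    rw [← htsq]
    have h1 : lam ^ 2 * s ^ 2 ≤ t * s := by rw [hssq]; exact hlower.trans hcs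
    have h2 : lam ^ 2 * (w ⬝ᵥ v) ≤ lam ^ 2 * (t * s) :=
      mul_le_mul_of_nonneg_left hcs (sq_nonneg lam)
    have h3 : lam ^ 2 * (lam ^ 2 * s ^ 2) ≤ lam ^ 2 * (t * s) :=
      mul_le_mul_of_nonneg_left h1 (sq_nonneg lam)
    nlinarith [sq_nonneg (lam ^ 2 * s - t), h2, h3, hs0, ht0]
  have hwAw0 : 0 ≤ w ⬝ᵥ A⁻¹ *ᵥ w := by
    rw [hdot]; exact krr_dot_self_nonneg _
  have hsqw : lam * Real.sqrt (w ⬝ᵥ A⁻¹ *ᵥ w) ≤ B := by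
    have : lam * Real.sqrt (w ⬝ᵥ A⁻¹ *ᵥ w) = Real.sqrt (lam ^ 2 * (w ⬝ᵥ A⁻¹ *ᵥ w)) := by
      rw [Real.sqrt_mul (by positivity), Real.sqrt_sq hlam.le]
    rw [this]
    exact le_trans (Real.sqrt_le_sqrt hwAw) hwB
  -- Cauchy-Schwarz in the A⁻¹ inner product
  have hcs2 : |φ x ⬝ᵥ A⁻¹ *ᵥ w|
      ≤ Real.sqrt (φ x ⬝ᵥ A⁻¹ *ᵥ φ x) * Real.sqrt (w ⬝ᵥ A⁻¹ *ᵥ w) := by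
    rw [hdot (φ x) w]
    calc |(S *ᵥ φ x) ⬝ᵥ (S *ᵥ w)|
        ≤ Real.sqrt ((S *ᵥ φ x) ⬝ᵥ (S *ᵥ φ x)) * Real.sqrt ((S *ᵥ w) ⬝ᵥ (S *ᵥ w)) :=
          krr_abs_dot_le _ _
      _ = _ := by rw [← hdot (φ x) (φ x), ← hdot w w]
  have hp0 : 0 ≤ Real.sqrt (φ x ⬝ᵥ A⁻¹ *ᵥ φ x) := Real.sqrt_nonneg _
  calc lam ^ 2 * |φ x ⬝ᵥ A⁻¹ *ᵥ w|
      ≤ lam ^ 2 * (Real.sqrt (φ x ⬝ᵥ A⁻¹ *ᵥ φ x) * Real.sqrt (w ⬝ᵥ A⁻¹ *ᵥ w)) :=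
        mul_le_mul_of_nonneg_left hcs2 (by positivity)
    _ = (lam * Real.sqrt (φ x ⬝ᵥ A⁻¹ *ᵥ φ x)) * (lam * Real.sqrt (w ⬝ᵥ A⁻¹ *ᵥ w)) := by ring
    _ ≤ (lam * Real.sqrt (φ x ⬝ᵥ A⁻¹ *ᵥ φ x)) * B :=
        mul_le_mul_of_nonneg_left hsqw (by positivity)
    _ = B * lam * Real.sqrt (φ x ⬝ᵥ A⁻¹ *ᵥ φ x) := by ring
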